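/- Let a > 0 be real and define h_a(M) = (1 + 1/M)^{(M+1)/2} · √(M/(M + a)) for M > 0. Then h_a is monotonically increasing on (0, ∞) if and only if a ≥ 1/2; moreover, for every a > 0, h_a(M) → √e as M → ∞. -/

import Mathlib

open Real Filter

lemma log_lower {t : ℝ} (ht : 0 < t) : 2*t/(2+t) < Real.log (1+t) := by
  have key : StrictMonoOn (fun t : ℝ => Real.log (1+t) - 2*t/(2+t)) (Set.Ici 0) := by
    apply strictMonoOn_of_deriv_pos (convex_Ici 0)
    · apply ContinuousOn.sub
      · exact (Real.continuousOn_log.comp (by fun_prop) (by intro x hx; simp at hx ⊢; positivity))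
      · exact ContinuousOn.div (by fun_prop) (by fun_prop) (by intro x hx; simp at hx ⊢; positivity)
    · intro x hx
      rw [interior_Ici] at hx
      simp only [Set.mem_Ioi] at hx
      have h1 : (0:ℝ) < 1 + x := by linarith
      have h2 : (0:ℝ) < 2 + x := by linarith
      have d1 : HasDerivAt (fun t : ℝ => Real.log (1+t)) ((1+x)⁻¹ * 1) x :=
        (Real.hasDerivAt_log h1.ne').comp x ((hasDerivAt_id x).const_add 1)
      have d2 : HasDerivAt (fun t : ℝ => 2*t/(2+t)) ((2*(2+x) - 2*x*1)/(2+x)^2) x := by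
        have := HasDerivAt.div (((hasDerivAt_id x).const_mul 2) : HasDerivAt (fun t : ℝ => 2*t) (2*1) x) (((hasDerivAt_id x).const_add 2) : HasDerivAt (fun t : ℝ => 2+t) 1 x) h2.ne'
        exact this.congr_deriv (by simp only [id_eq]; ring)
      rw [(show HasDerivAt (fun t => Real.log (1+t) - 2*t/(2+t)) _ x from d1.sub d2).deriv]
      refine sub_pos.2 ?_
      rw [show ((1+x)⁻¹ * 1 : ℝ) = 1/(1+x) from by ring, div_lt_div_iff₀ (by positivity) (by positivity)]
      nlinarith [sq_nonneg x]
  have h0 : (0:ℝ) ∈ Set.Ici (0:ℝ) := Set.self_mem_Ici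
  have := key h0 (Set.mem_Ici.2 ht.le) ht
  simp at this
  linarith

lemma log_upper {t : ℝ} (ht : 0 < t) : Real.log (1+t) < t*(2+t)/(2*(1+t)) := by
  have key : StrictMonoOn (fun t : ℝ => t*(2+t)/(2*(1+t)) - Real.log (1+t)) (Set.Ici 0) := by
    apply strictMonoOn_of_deriv_pos (convex_Ici 0)
    · apply ContinuousOn.sub
      · exact ContinuousOn.div (by fun_prop) (by fun_prop) (by intro x hx; simp at hx ⊢; positivity)
      · exact (Real.continuousOn_log.comp (by fun_prop) (by intro x hx; simp at hx ⊢; positivity))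
    · intro x hx
      rw [interior_Ici] at hx
      simp only [Set.mem_Ioi] at hx
      have h1 : (0:ℝ) < 1 + x := by linarith
      have h2 : (0:ℝ) < 2 * (1 + x) := by linarith
      have d1 : HasDerivAt (fun t : ℝ => Real.log (1+t)) ((1+x)⁻¹ * 1) x :=
        (Real.hasDerivAt_log h1.ne').comp x ((hasDerivAt_id x).const_add 1)
      have dnum : HasDerivAt (fun t : ℝ => t*(2+t)) (1*(2+x) + x*1) x :=
        (hasDerivAt_id x).mul ((hasDerivAt_id x).const_add 2)
      have dden : HasDerivAt (fun t : ℝ => 2*(1+t)) (2*1) x := by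
        have := (((hasDerivAt_id x).const_add 1).const_mul 2 :
          HasDerivAt (fun t : ℝ => 2*(1+t)) (2*1) x)
        exact this
      have d2 : HasDerivAt (fun t : ℝ => t*(2+t)/(2*(1+t)))
          (((1*(2+x) + x*1)*(2*(1+x)) - x*(2+x)*(2*1))/(2*(1+x))^2) x :=
        dnum.div dden h2.ne'
      rw [(show HasDerivAt (fun t => t*(2+t)/(2*(1+t)) - Real.log (1+t)) _ x from d2.sub d1).deriv]
      refine sub_pos.2 ?_
      rw [show ((1+x)⁻¹ * 1 : ℝ) = 1/(1+x) from by ring,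
        div_lt_div_iff₀ (by positivity) (by positivity)]
      nlinarith [sq_nonneg x]
  have := key Set.self_mem_Ici (Set.mem_Ici.2 ht.le) ht
  simp at this
  linarith

noncomputable def gfun (a M : ℝ) : ℝ :=
  ((M+1)/2)*(Real.log (M+1) - Real.log M) + (1/2)*(Real.log M - Real.log (M+a))

lemma hasDerivAt_gfun {a M : ℝ} (ha : 0 < a) (hM : 0 < M) :
    HasDerivAt (gfun a) ((1/2)*(Real.log (M+1) - Real.log M - 1/(M+a))) M := by
  have h1 : (0:ℝ) < M + 1 := by linarith
  have h2 : (0:ℝ) < M + a := by linarith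
  have dl1 : HasDerivAt (fun M : ℝ => Real.log (M+1)) ((M+1)⁻¹ * 1) M :=
    (Real.hasDerivAt_log h1.ne').comp (h₂ := Real.log) M ((hasDerivAt_id M).add_const 1)
  have dl2 : HasDerivAt (fun M : ℝ => Real.log (M+a)) ((M+a)⁻¹ * 1) M :=
    HasDerivAt.comp (h₂ := Real.log) M (Real.hasDerivAt_log h2.ne') ((hasDerivAt_id M).add_const a)
  have dl0 : HasDerivAt Real.log M⁻¹ M := Real.hasDerivAt_log hM.ne'
  have dc : HasDerivAt (fun M : ℝ => (M+1)/2) (1/2) M := by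
    have := ((hasDerivAt_id M).add_const 1).div_const 2
    simpa using this
  have dfirst : HasDerivAt (fun M : ℝ => ((M+1)/2)*(Real.log (M+1) - Real.log M))
      ((1/2)*(Real.log (M+1) - Real.log M) + ((M+1)/2)*((M+1)⁻¹ * 1 - M⁻¹)) M :=
    dc.mul (dl1.sub dl0)
  have dsecond : HasDerivAt (fun M : ℝ => (1/2)*(Real.log M - Real.log (M+a)))
      ((1/2)*(M⁻¹ - (M+a)⁻¹ * 1)) M :=
    (dl0.sub dl2).const_mul (1/2)
  have := dfirst.add dsecond
  refine this.congr_deriv ?_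
  field_simp
  ring

lemma h_eq_exp_gfun {a M : ℝ} (ha : 0 < a) (hM : 0 < M) :
    (1 + 1 / M) ^ ((M + 1) / 2) * Real.sqrt (M / (M + a)) = Real.exp (gfun a M) := by
  have h1 : (0:ℝ) < M + 1 := by linarith
  have h2 : (0:ℝ) < M + a := by linarith
  have hb : (0:ℝ) < 1 + 1/M := by positivity
  have hq : (0:ℝ) < M/(M+a) := by positivity
  rw [Real.rpow_def_of_pos hb, Real.sqrt_eq_rpow, Real.rpow_def_of_pos hq,
    ← Real.exp_add]
  congr 1
  have e1 : Real.log (1 + 1/M) = Real.log (M+1) - Real.log M := by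
    rw [show (1 + 1/M : ℝ) = (M+1)/M from by field_simp, Real.log_div h1.ne' hM.ne']
  have e2 : Real.log (M/(M+a)) = Real.log M - Real.log (M+a) :=
    Real.log_div hM.ne' h2.ne'
  rw [e1, e2, gfun]
  ring

theorem monotone_and_limit_h
    (a : ℝ) (ha : 0 < a) :
    (StrictMonoOn (fun M : ℝ => (1 + 1 / M) ^ ((M + 1) / 2) * Real.sqrt (M / (M + a)))
        (Set.Ioi (0 : ℝ)) ↔ 1 / 2 ≤ a) ∧
    Tendsto (fun M : ℝ => (1 + 1 / M) ^ ((M + 1) / 2) * Real.sqrt (M / (M + a)))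
      atTop (nhds (Real.sqrt (Real.exp 1))) := by
  constructor
  · constructor
    · -- strict mono ⇒ a ≥ 1/2
      intro hmono
      by_contra hlt
      push_neg at hlt
      have h2a : (0:ℝ) < 1 - 2*a := by linarith
      set M0 : ℝ := a/(1-2*a) + 1 with hM0def
      have hM0pos : (0:ℝ) < M0 := by positivity
      have anti : StrictAntiOn (gfun a) (Set.Icc M0 (M0+1)) := by
        apply strictAntiOn_of_deriv_neg (convex_Icc _ _)
        · intro x hx
          have hx0 : 0 < x := lt_of_lt_of_le hM0pos hx.1
          exact (hasDerivAt_gfun ha hx0).continuousAt.continuousWithinAt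
        · intro x hx
          rw [interior_Icc] at hx
          have hx0 : 0 < x := lt_trans hM0pos hx.1
          rw [(hasDerivAt_gfun ha hx0).deriv]
          have hupper := log_upper (t := 1/x) (by positivity)
          have e1 : Real.log (1 + 1/x) = Real.log (x+1) - Real.log x := by
            rw [show (1 + 1/x : ℝ) = (x+1)/x from by field_simp,
              Real.log_div (by linarith : (x+1:ℝ) ≠ 0) hx0.ne']
          have e2 : (1/x)*(2+1/x)/(2*(1+1/x)) = (2*x+1)/(2*x*(x+1)) := by
            field_simp
          rw [e1, e2] at hupper
          have key : (2*x+1)/(2*x*(x+1)) < 1/(x+a) := by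
            rw [div_lt_div_iff₀ (by positivity) (by positivity)]
            have hxgt : a/(1-2*a) < x := by
              have hxx : M0 < x := hx.1
              rw [hM0def] at hxx
              linarith
            rw [div_lt_iff₀ h2a] at hxgt
            nlinarith
          have : Real.log (x+1) - Real.log x - 1/(x+a) < 0 := by linarith
          nlinarith
      have m1 : M0 ∈ Set.Ioi (0:ℝ) := hM0pos
      have m2 : M0+1 ∈ Set.Ioi (0:ℝ) := by simp; linarith
      have hlt1 := hmono m1 m2 (by linarith)
      simp only at hlt1
      rw [h_eq_exp_gfun ha hM0pos, h_eq_exp_gfun ha (by linarith : (0:ℝ) < M0+1)] at hlt1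
      have hgt := anti (Set.left_mem_Icc.2 (by linarith)) (Set.right_mem_Icc.2 (by linarith))
        (by linarith)
      exact absurd (Real.exp_lt_exp.mp hlt1) (not_lt.2 hgt.le)
    · -- a ≥ 1/2 ⇒ strict mono
      intro hage
      have gm : StrictMonoOn (gfun a) (Set.Ioi 0) := by
        apply strictMonoOn_of_deriv_pos (convex_Ioi 0)
        · intro x hx
          exact (hasDerivAt_gfun ha hx).continuousAt.continuousWithinAt
        · intro x hx
          rw [interior_Ioi] at hx
          rw [(hasDerivAt_gfun ha hx).deriv]
          have hx0 : (0:ℝ) < x := hx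
          have hlow := log_lower (t := 1/x) (one_div_pos.2 hx0)
          have e1 : Real.log (1 + 1/x) = Real.log (x+1) - Real.log x := by
            rw [show (1 + 1/x : ℝ) = (x+1)/x from by field_simp,
              Real.log_div (by linarith : (x+1:ℝ) ≠ 0) hx0.ne']
          have e2 : 2*(1/x)/(2+1/x) = 2/(2*x+1) := by
            rw [div_eq_div_iff (by positivity) (by positivity)]
            field_simp
          rw [e1, e2] at hlow
          have key : 1/(x+a) ≤ 2/(2*x+1) := by
            rw [div_le_div_iff₀ (by linarith) (by linarith)]
            linarith
          have : 0 < Real.log (x+1) - Real.log x - 1/(x+a) := by linarith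
          nlinarith
      intro x hx y hy hxy
      simp only
      rw [h_eq_exp_gfun ha hx, h_eq_exp_gfun ha hy]
      exact Real.exp_lt_exp.2 (gm hx hy hxy)
  · -- limit
    have l1 : Tendsto (fun M : ℝ => (1+1/M)^(M:ℝ)) atTop (nhds (Real.exp 1)) := by
      simpa using tendsto_one_add_div_rpow_exp 1
    have c1 : ContinuousAt (fun x : ℝ => x ^ (1/2 : ℝ)) (Real.exp 1) :=
      Real.continuousAt_rpow_const _ _ (Or.inl (Real.exp_pos 1).ne')
    have l2 : Tendsto (fun M : ℝ => ((1+1/M)^(M:ℝ))^(1/2:ℝ)) atTop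
        (nhds ((Real.exp 1) ^ (1/2:ℝ))) := c1.tendsto.comp l1
    have lbase : Tendsto (fun M : ℝ => 1 + 1/M) atTop (nhds 1) := by
      have := tendsto_inv_atTop_zero (𝕜 := ℝ)
      have h := (tendsto_const_nhds (x := (1:ℝ)) (f := atTop)).add this
      simpa [one_div] using h
    have c2 : ContinuousAt (fun x : ℝ => x ^ (1/2 : ℝ)) 1 :=
      Real.continuousAt_rpow_const _ _ (Or.inl one_ne_zero)
    have l3 : Tendsto (fun M : ℝ => (1+1/M)^(1/2:ℝ)) atTop (nhds ((1:ℝ)^(1/2:ℝ))) :=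
      c2.tendsto.comp lbase
    have lq : Tendsto (fun M : ℝ => M/(M+a)) atTop (nhds 1) := by
      have h1 : Tendsto (fun M : ℝ => 1 + a/M) atTop (nhds 1) := by
        have := (tendsto_inv_atTop_zero (𝕜 := ℝ)).const_mul a
        have h := (tendsto_const_nhds (x := (1:ℝ)) (f := atTop)).add this
        simpa [div_eq_mul_inv] using h
      have h2 : Tendsto (fun M : ℝ => (1 + a/M)⁻¹) atTop (nhds 1) := by
        simpa using h1.inv₀ (by norm_num)
      refine h2.congr' ?_
      filter_upwards [eventually_gt_atTop (0:ℝ)] with M hM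
      have hMa : (0:ℝ) < M + a := by linarith
      field_simp
    have l4 : Tendsto (fun M : ℝ => Real.sqrt (M/(M+a))) atTop (nhds 1) := by
      have := (Real.continuous_sqrt.continuousAt (x := (1:ℝ))).tendsto.comp lq
      simpa [Function.comp_def] using this
    have lprod := (l2.mul l3).mul l4
    rw [Real.one_rpow, mul_one, mul_one] at lprod
    rw [show Real.sqrt (Real.exp 1) = (Real.exp 1)^(1/2:ℝ) from Real.sqrt_eq_rpow _]
    refine Tendsto.congr' ?_ lprod
    · filter_upwards [eventually_gt_atTop (0:ℝ)] with M hM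
      have hb : (0:ℝ) < 1 + 1/M := by positivity
      have e1 : ((1+1/M)^(M:ℝ))^(1/2:ℝ) = (1+1/M)^(M*(1/2):ℝ) :=
        (Real.rpow_mul hb.le M (1/2)).symm
      have e2 : (1+1/M)^(M*(1/2):ℝ) * (1+1/M)^(1/2:ℝ) = (1+1/M)^((M+1)/2:ℝ) := by
        rw [← Real.rpow_add hb]; ring_nf
      rw [e1, e2]
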